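/- Let q be a prime power, h ≥ 2 an integer, and θ a primitive element (generator of the multiplicative group) of F_{q^h}. Then the set B(q,h,θ) = {log_θ(θ + a) mod (q^h − 1) : a ∈ F_q} is a B_h set in Z/(q^h − 1)Z with exactly q elements. -/

import Mathlib

/-- Additive `B_h[g]` property. -/
def IsBhg {G : Type*} [AddCommMonoid G] (A : Set G) (h g : ℕ) : Prop :=
  ∀ b : G, ∀ s : Finset (Multiset G),
    (∀ m ∈ s, Multiset.card m = h ∧ (∀ x ∈ m, x ∈ A) ∧ m.sum = b) → s.card ≤ g

theorem stmt_6 {Fq E : Type*} [Field Fq] [Fintype Fq] [Field E] [Fintype E] [Algebra Fq E]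
    (q h : ℕ) (hq : Fintype.card Fq = q) (hh : 2 ≤ h) (hcard : Fintype.card E = q ^ h)
    (θ : Eˣ) (hθ : ∀ x : Eˣ, x ∈ Subgroup.zpowers θ)
    -- `e` is the discrete logarithm to base `θ`
    (e : Eˣ ≃* Multiplicative (ZMod (q ^ h - 1)))
    (he : e θ = Multiplicative.ofAdd 1) :
    IsBhg {x : ZMod (q ^ h - 1) | ∃ a : Fq, ∃ u : Eˣ,
        (u : E) = (θ : E) + algebraMap Fq E a ∧ x = Multiplicative.toAdd (e u)} h 1 ∧
    Set.ncard {x : ZMod (q ^ h - 1) | ∃ a : Fq, ∃ u : Eˣ,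
        (u : E) = (θ : E) + algebraMap Fq E a ∧ x = Multiplicative.toAdd (e u)} = q := by
  classical
  have hq2 : 2 ≤ q := hq ▸ Fintype.one_lt_card
  have hqh : q < q ^ h := by
    calc q = q ^ 1 := (pow_one q).symm
    _ < q ^ h := Nat.pow_lt_pow_right (by omega) (by omega)
  -- order of θ
  have hordθ : orderOf θ = q ^ h - 1 := by
    rw [orderOf_eq_card_of_forall_mem_zpowers hθ, Nat.card_units, Nat.card_eq_fintype_card,
      hcard]
  -- θ + a is never zero
  have hne : ∀ a : Fq, (θ : E) + algebraMap Fq E a ≠ 0 := by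
    intro a hzero
    have h1 : (θ : E) = algebraMap Fq E (-a) := by
      rw [map_neg]; exact eq_neg_of_add_eq_zero_left hzero
    have ha : (-a : Fq) ≠ 0 := by
      intro h0; rw [h0, map_zero] at h1; exact Units.ne_zero θ h1
    have hpow : (θ : E) ^ (q - 1) = 1 := by
      rw [h1, ← map_pow, ← hq, FiniteField.pow_card_sub_one_eq_one _ ha, map_one]
    have hu : θ ^ (q - 1) = 1 :=
      Units.ext (by rw [Units.val_pow_eq_pow_val, hpow, Units.val_one])
    have hdvd := orderOf_dvd_of_pow_eq_one hu
    rw [hordθ] at hdvd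
    have hle := Nat.le_of_dvd (by omega) hdvd
    omega
  have hunit : ∀ a : Fq, IsUnit ((θ : E) + algebraMap Fq E a) := fun a => Ne.isUnit (hne a)
  set uA : Fq → Eˣ := fun a => (hunit a).unit with huAdef
  have huA : ∀ a, (uA a : E) = (θ : E) + algebraMap Fq E a := fun a => (hunit a).unit_spec
  set f : Fq → ZMod (q ^ h - 1) := fun a => Multiplicative.toAdd (e (uA a)) with hfdef
  have hfinj : Function.Injective f := by
    intro a b hab
    have h1 : uA a = uA b := e.injective (Multiplicative.toAdd.injective hab)
    have h2 := congrArg Units.val h1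
    rw [huA, huA] at h2
    exact (algebraMap Fq E).injective (add_left_cancel h2)
  have hA : {x : ZMod (q ^ h - 1) | ∃ a : Fq, ∃ u : Eˣ,
      (u : E) = (θ : E) + algebraMap Fq E a ∧ x = Multiplicative.toAdd (e u)} = Set.range f := by
    ext x
    constructor
    · rintro ⟨a, u, hu, rfl⟩
      have : u = uA a := Units.ext (by rw [huA, hu])
      exact ⟨a, by rw [this]⟩
    · rintro ⟨a, rfl⟩
      exact ⟨a, uA a, huA a, rfl⟩
  -- finrank
  have hfd : Module.finrank Fq E = h := by
    have hc := Module.card_eq_pow_finrank (K := Fq) (V := E)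
    rw [hq, hcard] at hc
    exact Nat.pow_right_injective hq2 hc.symm
  have hint : IsIntegral Fq ((θ : E)) := IsIntegral.of_finite Fq _
  -- adjoin θ is everything
  have htop : IntermediateField.adjoin Fq {((θ : E))} = ⊤ := by
    rw [eq_top_iff]
    intro y _
    by_cases hy : y = 0
    · rw [hy]; exact zero_mem _
    · obtain ⟨k, hk⟩ := mem_powers_iff_mem_zpowers.mpr (hθ (Units.mk0 y hy))
      have hky : ((θ : E)) ^ k = y := by
        rw [← Units.val_pow_eq_pow_val]; exact congrArg Units.val hk
      rw [← hky]
      exact pow_mem (IntermediateField.mem_adjoin_simple_self Fq _) k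
  have hmin : (minpoly Fq ((θ : E))).natDegree = h := by
    rw [← IntermediateField.adjoin.finrank hint, htop, IntermediateField.finrank_top', hfd]
  -- key uniqueness of multisets
  have hprod : ∀ m m' : Multiset Fq, Multiset.card m = h → Multiset.card m' = h →
      (m.map (fun a => (θ : E) + algebraMap Fq E a)).prod
        = (m'.map (fun a => (θ : E) + algebraMap Fq E a)).prod → m = m' := by
    intro m m' hm hm' hprodeq
    set P := (m.map (fun a => Polynomial.X + Polynomial.C a)).prod with hP
    set Q := (m'.map (fun a => Polynomial.X + Polynomial.C a)).prod with hQ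
    have hPmon : P.Monic := Polynomial.monic_multiset_prod_of_monic _ _
      (fun a _ => Polynomial.monic_X_add_C a)
    have hQmon : Q.Monic := Polynomial.monic_multiset_prod_of_monic _ _
      (fun a _ => Polynomial.monic_X_add_C a)
    have hPdeg : P.natDegree = h := by
      rw [hP, Polynomial.natDegree_multiset_prod_of_monic _ (by
        intro p hp
        obtain ⟨a, _, rfl⟩ := Multiset.mem_map.mp hp
        exact Polynomial.monic_X_add_C a)]
      simp [Multiset.map_map, Function.comp, hm]
    have hQdeg : Q.natDegree = h := by
      rw [hQ, Polynomial.natDegree_multiset_prod_of_monic _ (by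
        intro p hp
        obtain ⟨a, _, rfl⟩ := Multiset.mem_map.mp hp
        exact Polynomial.monic_X_add_C a)]
      simp [Multiset.map_map, Function.comp, hm']
    have hPev : Polynomial.aeval ((θ : E)) P
        = (m.map (fun a => (θ : E) + algebraMap Fq E a)).prod := by
      rw [hP, map_multiset_prod, Multiset.map_map]
      congr 1
      apply Multiset.map_congr rfl
      intro a _
      simp [Polynomial.aeval_def]
    have hQev : Polynomial.aeval ((θ : E)) Q
        = (m'.map (fun a => (θ : E) + algebraMap Fq E a)).prod := by
      rw [hQ, map_multiset_prod, Multiset.map_map]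
      congr 1
      apply Multiset.map_congr rfl
      intro a _
      simp [Polynomial.aeval_def]
    have hPQ : P = Q := by
      by_contra hne'
      have hsub : P - Q ≠ 0 := sub_ne_zero.mpr hne'
      have haev : Polynomial.aeval ((θ : E)) (P - Q) = 0 := by
        rw [map_sub, hPev, hQev, hprodeq, sub_self]
      have hdvd := minpoly.dvd Fq ((θ : E)) haev
      have hled := Polynomial.degree_le_of_dvd hdvd hsub
      have hlt : (P - Q).degree < P.degree :=
        Polynomial.degree_sub_lt
          (by rw [Polynomial.degree_eq_natDegree hPmon.ne_zero, Polynomial.degree_eq_natDegree hQmon.ne_zero, hPdeg, hQdeg])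
          hPmon.ne_zero (by rw [hPmon.leadingCoeff, hQmon.leadingCoeff])
      have hmd : (minpoly Fq ((θ : E))).degree = (h : ℕ) := by
        rw [Polynomial.degree_eq_natDegree (minpoly.ne_zero hint), hmin]
      rw [hmd] at hled
      rw [Polynomial.degree_eq_natDegree hPmon.ne_zero, hPdeg] at hlt
      exact absurd (lt_of_le_of_lt hled hlt) (lt_irrefl _)
    -- extract roots
    have hPr : ∀ t : Multiset Fq, ((t.map (fun a => Polynomial.X + Polynomial.C a)).prod
        : Polynomial Fq).roots = t.map (fun a => -a) := by
      intro t
      have : (t.map (fun a => Polynomial.X + Polynomial.C a))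
          = ((t.map (fun a => -a)).map (fun a => Polynomial.X - Polynomial.C a)) := by
        rw [Multiset.map_map]
        apply Multiset.map_congr rfl
        intro a _
        simp [sub_neg_eq_add]
      rw [this, Polynomial.roots_multiset_prod_X_sub_C]
    have hroots : m.map (fun a => -a) = m'.map (fun a => -a) := by
      rw [← hPr m, ← hPr m', ← hP, ← hQ, hPQ]
    exact Multiset.map_injective neg_injective hroots
  -- sum of logs is log of product
  have hsum : ∀ m : Multiset Fq,
      (m.map f).sum = Multiplicative.toAdd (e ((m.map uA).prod)) := by
    intro m
    induction m using Multiset.induction with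
    | empty => simp
    | cons a m ih => simp [ih, map_mul]; rfl
  -- lifting
  have hlift : ∀ m : Multiset (ZMod (q ^ h - 1)), (∀ x ∈ m, x ∈ Set.range f) →
      ∃ m' : Multiset Fq, m = m'.map f := by
    intro m
    induction m using Multiset.induction with
    | empty => intro _; exact ⟨0, by simp⟩
    | cons x m ih =>
      intro hmem
      obtain ⟨m', hm'⟩ := ih (fun y hy => hmem y (Multiset.mem_cons_of_mem hy))
      obtain ⟨a, ha⟩ := hmem x (Multiset.mem_cons_self _ _)
      exact ⟨a ::ₘ m', by simp [hm', ha]⟩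
  constructor
  · intro b s hs
    rw [Finset.card_le_one]
    intro m1 hm1 m2 hm2
    obtain ⟨hc1, hmem1, hsum1⟩ := hs m1 hm1
    obtain ⟨hc2, hmem2, hsum2⟩ := hs m2 hm2
    rw [hA] at hmem1 hmem2
    obtain ⟨n1, rfl⟩ := hlift m1 hmem1
    obtain ⟨n2, rfl⟩ := hlift m2 hmem2
    have hcard1 : Multiset.card n1 = h := by simpa using hc1
    have hcard2 : Multiset.card n2 = h := by simpa using hc2
    have hsums : (n1.map f).sum = (n2.map f).sum := hsum1.trans hsum2.symm
    rw [hsum n1, hsum n2] at hsums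
    have hprodu : (n1.map uA).prod = (n2.map uA).prod :=
      e.injective (Multiplicative.toAdd.injective hsums)
    have hprodE : (n1.map (fun a => (θ : E) + algebraMap Fq E a)).prod
        = (n2.map (fun a => (θ : E) + algebraMap Fq E a)).prod := by
      have hval := congrArg (Units.coeHom E) hprodu
      rw [map_multiset_prod, map_multiset_prod, Multiset.map_map, Multiset.map_map] at hval
      simpa [Function.comp_def, huA] using hval
    rw [hprod n1 n2 hcard1 hcard2 hprodE]
  · rw [hA, ← Set.image_univ, Set.ncard_image_of_injective _ hfinj, Set.ncard_univ,
      Nat.card_eq_fintype_card, hq]
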